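/- Let F and G be cumulative distribution functions on the real line, δ > 0, K ≥ 0 and μ ∈ ℝ. Then L_δ(F,G) ≤ 1 − F(μ+K) + F(μ−K) + [ (1/δ) ∫_{[μ−K−δ, μ+K+2δ]} |F(x) − G(x)|² dλ(x) ]^{1/2}, where λ is Lebesgue measure; and moreover L_δ(F,G)² ≤ (1/δ) ∫_{ℝ} |F(x) − G(x)|² dλ(x). -/

import Mathlib

open Filter MeasureTheory Set

/-- A cumulative distribution function on ℝ: nondecreasing, right-continuous,
with limit 0 at -∞ and 1 at +∞. -/
def IsCDF (F : ℝ → ℝ) : Prop :=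
  Monotone F ∧ (∀ t : ℝ, ContinuousWithinAt F (Set.Ici t) t) ∧
    Tendsto F atBot (nhds 0) ∧ Tendsto F atTop (nhds 1)

/-- The Lévy gauge with tolerance `δ` between two cdfs. -/
noncomputable def levyGauge (δ : ℝ) (F G : ℝ → ℝ) : ℝ :=
  sInf {ε : ℝ | 0 ≤ ε ∧ ∀ t : ℝ, F (t - δ) - ε ≤ G t ∧ G t ≤ F (t + δ) + ε}

/-- `L²` bounds for the Lévy gauge:
`L_δ(F,G) ≤ 1 - F(μ+K) + F(μ-K) + √((1/δ) ∫_{[μ-K-δ, μ+K+2δ]} |F-G|² dλ)` and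
`L_δ(F,G)² ≤ (1/δ) ∫_ℝ |F-G|² dλ`. -/
theorem levyGauge_le_L2 (F G : ℝ → ℝ) (hF : IsCDF F) (hG : IsCDF G)
    (δ : ℝ) (hδ : 0 < δ) (K : ℝ) (hK : 0 ≤ K) (μ : ℝ) :
    levyGauge δ F G ≤ 1 - F (μ + K) + F (μ - K) +
      Real.sqrt ((1 / δ) * ∫ x in Set.Icc (μ - K - δ) (μ + K + 2 * δ), |F x - G x| ^ 2) ∧
    ENNReal.ofReal ((levyGauge δ F G) ^ 2) ≤
      ENNReal.ofReal (1 / δ) * ∫⁻ x : ℝ, ENNReal.ofReal (|F x - G x| ^ 2) := by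
  obtain ⟨hFm, -, hFbot, hFtop⟩ := hF
  obtain ⟨hGm, -, hGbot, hGtop⟩ := hG
  have hF0 : ∀ x, 0 ≤ F x := fun x => hFm.le_of_tendsto hFbot x
  have hF1 : ∀ x, F x ≤ 1 := fun x => hFm.ge_of_tendsto hFtop x
  have hG0 : ∀ x, 0 ≤ G x := fun x => hGm.le_of_tendsto hGbot x
  have hG1 : ∀ x, G x ≤ 1 := fun x => hGm.ge_of_tendsto hGtop x
  have h1S : (1:ℝ) ∈ {ε : ℝ | 0 ≤ ε ∧ ∀ t : ℝ, F (t - δ) - ε ≤ G t ∧ G t ≤ F (t + δ) + ε} :=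
    ⟨zero_le_one, fun t =>
      ⟨by linarith [hF1 (t - δ), hG0 t], by linarith [hF0 (t + δ), hG1 t]⟩⟩
  have hbdd : BddBelow {ε : ℝ | 0 ≤ ε ∧ ∀ t : ℝ, F (t - δ) - ε ≤ G t ∧ G t ≤ F (t + δ) + ε} :=
    ⟨0, fun ε hε => hε.1⟩
  have hL0 : 0 ≤ levyGauge δ F G := le_csInf ⟨1, h1S⟩ fun ε hε => hε.1
  have hnot : ∀ ε : ℝ, 0 ≤ ε → ε < levyGauge δ F G →
      ∃ t, G t < F (t - δ) - ε ∨ F (t + δ) + ε < G t := by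
    intro ε hε0 hεL
    by_contra h
    push_neg at h
    have hmem : ε ∈ {ε : ℝ | 0 ≤ ε ∧ ∀ t : ℝ, F (t - δ) - ε ≤ G t ∧ G t ≤ F (t + δ) + ε} :=
      ⟨hε0, fun t => ⟨(h t).1, (h t).2⟩⟩
    exact absurd (csInf_le hbdd hmem) (not_le.mpr hεL)
  have hmeasf : Measurable fun x : ℝ => |F x - G x| ^ 2 :=
    ((hFm.measurable.sub hGm.measurable).abs).pow_const 2
  have hdiff1 : ∀ x, |F x - G x| ≤ 1 := fun x =>
    abs_le.mpr ⟨by linarith [hF0 x, hG1 x], by linarith [hF1 x, hG0 x]⟩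
  constructor
  · -- Part 1
    set a₀ := μ - K - δ with ha₀
    set b₀ := μ + K + 2 * δ with hb₀
    set J := ∫ x in Set.Icc a₀ b₀, |F x - G x| ^ 2 with hJ
    have hintJ : IntegrableOn (fun x => |F x - G x| ^ 2) (Icc a₀ b₀) volume := by
      apply Measure.integrableOn_of_bounded measure_Icc_lt_top.ne
        hmeasf.aestronglyMeasurable (M := 1)
      filter_upwards with x
      rw [Real.norm_eq_abs, abs_of_nonneg (by positivity)]
      exact pow_le_one₀ (abs_nonneg _) (hdiff1 x)
    have key : ∀ a c : ℝ, 0 ≤ c → a₀ ≤ a → a + δ ≤ b₀ →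
        (∀ x ∈ Icc a (a + δ), c ≤ |F x - G x|) → c ≤ Real.sqrt ((1 / δ) * J) := by
      intro a c hc ha hb hlow
      have hsub : Icc a (a + δ) ⊆ Icc a₀ b₀ := Icc_subset_Icc ha hb
      have e1 : ∫ _x in Icc a (a + δ), (c ^ 2 : ℝ) = δ * c ^ 2 := by
        rw [setIntegral_const, Real.volume_real_Icc_of_le (by linarith), smul_eq_mul]
        ring
      have h1 : δ * c ^ 2 ≤ J := by
        calc δ * c ^ 2 = ∫ _x in Icc a (a + δ), (c ^ 2 : ℝ) := e1.symm
          _ ≤ ∫ x in Icc a (a + δ), |F x - G x| ^ 2 :=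
            setIntegral_mono_on (integrableOn_const measure_Icc_lt_top.ne)
              (hintJ.mono_set hsub) measurableSet_Icc
              (fun x hx => pow_le_pow_left₀ hc (hlow x hx) 2)
          _ ≤ J :=
            setIntegral_mono_set hintJ (ae_of_all _ fun x => by positivity)
              (HasSubset.Subset.eventuallyLE hsub)
      have h2 : c ^ 2 ≤ (1 / δ) * J := by
        rw [one_div, inv_mul_eq_div, le_div_iff₀ hδ]
        nlinarith
      calc c = Real.sqrt (c ^ 2) := (Real.sqrt_sq hc).symm
        _ ≤ _ := Real.sqrt_le_sqrt h2
    have hsq0 : 0 ≤ Real.sqrt ((1 / δ) * J) := Real.sqrt_nonneg _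
    clear_value a₀ b₀ J
    by_contra hcon
    push_neg at hcon
    set R := 1 - F (μ + K) + F (μ - K) + Real.sqrt ((1 / δ) * J) with hR
    clear_value R
    have hR0 : 0 ≤ R := by
      have := hF1 (μ + K); have := hF0 (μ - K); linarith
    set ε := (R + levyGauge δ F G) / 2 with hε
    clear_value ε
    have hε0 : 0 ≤ ε := by linarith
    have hεL : ε < levyGauge δ F G := by linarith
    have hRε : R < ε := by linarith
    obtain ⟨t, ht⟩ := hnot ε hε0 hεL
    have : ε ≤ R := by
      have hFK1 := hF1 (μ + K)
      have hFK0 := hF0 (μ - K)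
      rcases ht with h | h
      · rcases lt_or_ge t (μ - K) with h1 | h1
        · have := hFm (show t - δ ≤ μ - K by linarith)
          have := hG0 t
          linarith
        · rcases le_or_gt t (μ + K + 2 * δ) with h2 | h2
          · have hkey := key (t - δ) (F (t - δ) - G t) (by linarith [hG0 t])
              (by linarith) (by linarith)
              (fun x hx => by
                have h3 : F (t - δ) ≤ F x := hFm hx.1
                have h4 : G x ≤ G t := hGm (by linarith [hx.2])
                calc F (t - δ) - G t ≤ F x - G x := by linarith
                  _ ≤ |F x - G x| := le_abs_self _)
            linarith
          · rcases le_or_gt (F (μ + K)) (G t) with h3 | h3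
            · have := hF1 (t - δ)
              linarith
            · have hkey := key (μ + K + δ) (F (μ + K) - G t) (by linarith)
                (by linarith) (by linarith)
                (fun x hx => by
                  have h4 : F (μ + K) ≤ F x := hFm (by linarith [hx.1])
                  have h5 : G x ≤ G t := hGm (by
                    have := hx.2
                    linarith)
                  calc F (μ + K) - G t ≤ F x - G x := by linarith
                    _ ≤ |F x - G x| := le_abs_self _)
              have := hF1 (t - δ)
              linarith
      · rcases lt_or_ge (μ + K + δ) t with h1 | h1
        · have := hFm (show μ + K ≤ t + δ by linarith)
          have := hG1 t
          linarith
        · rcases le_or_gt a₀ t with h2 | h2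
          · have hkey := key t (G t - F (t + δ))
              (by linarith [hF0 (t + δ), hG0 t, hε0]) h2 (by linarith)
              (fun x hx => by
                have h3 : G t ≤ G x := hGm hx.1
                have h4 : F x ≤ F (t + δ) := hFm hx.2
                calc G t - F (t + δ) ≤ G x - F x := by linarith
                  _ ≤ |G x - F x| := le_abs_self _
                  _ = |F x - G x| := abs_sub_comm _ _)
            linarith
          · rcases le_or_gt (G a₀) (F (μ - K)) with h3 | h3
            · have := hGm (show t ≤ a₀ by linarith)
              have := hF0 (t + δ)
              linarith
            · have hkey := key a₀ (G a₀ - F (μ - K)) (by linarith) le_rfl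
                (by linarith)
                (fun x hx => by
                  have h4 : G a₀ ≤ G x := hGm hx.1
                  have h5 : F x ≤ F (μ - K) := hFm (by
                    have := hx.2
                    linarith)
                  calc G a₀ - F (μ - K) ≤ G x - F x := by linarith
                    _ ≤ |G x - F x| := le_abs_self _
                    _ = |F x - G x| := abs_sub_comm _ _)
              have := hGm (show t ≤ a₀ by linarith)
              have := hF0 (t + δ)
              linarith
    linarith
  · -- Part 2
    set I := ∫⁻ x : ℝ, ENNReal.ofReal (|F x - G x| ^ 2) with hI
    have key2 : ∀ ε : ℝ, 0 ≤ ε → ε < levyGauge δ F G → ENNReal.ofReal (δ * ε ^ 2) ≤ I := by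
      intro ε hε0 hεL
      obtain ⟨t, ht⟩ := hnot ε hε0 hεL
      have main : ∀ a : ℝ, (∀ x ∈ Icc a (a + δ), ε ≤ |F x - G x|) →
          ENNReal.ofReal (δ * ε ^ 2) ≤ I := by
        intro a hlow
        calc ENNReal.ofReal (δ * ε ^ 2)
            = ENNReal.ofReal (ε ^ 2) * volume (Icc a (a + δ)) := by
              rw [Real.volume_Icc, show a + δ - a = δ by ring,
                ← ENNReal.ofReal_mul (by positivity), mul_comm]
          _ = ∫⁻ _x in Icc a (a + δ), ENNReal.ofReal (ε ^ 2) :=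
              (setLIntegral_const _ _).symm
          _ ≤ ∫⁻ x in Icc a (a + δ), ENNReal.ofReal (|F x - G x| ^ 2) :=
              setLIntegral_mono hmeasf.ennreal_ofReal
                (fun x hx => ENNReal.ofReal_le_ofReal (pow_le_pow_left₀ hε0 (hlow x hx) 2))
          _ ≤ I := setLIntegral_le_lintegral _ _
      rcases ht with h | h
      · exact main (t - δ) (fun x hx => by
          have h3 : F (t - δ) ≤ F x := hFm hx.1
          have h4 : G x ≤ G t := hGm (by linarith [hx.2])
          calc ε ≤ F x - G x := by linarith
            _ ≤ |F x - G x| := le_abs_self _)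
      · exact main t (fun x hx => by
          have h3 : G t ≤ G x := hGm hx.1
          have h4 : F x ≤ F (t + δ) := hFm hx.2
          calc ε ≤ G x - F x := by linarith
            _ ≤ |G x - F x| := le_abs_self _
            _ = |F x - G x| := abs_sub_comm _ _)
    rcases eq_top_or_lt_top I with hItop | hIlt
    · rw [hItop, ENNReal.mul_top (by simp [ENNReal.ofReal_eq_zero]; positivity)]
      exact le_top
    · set C := I.toReal with hC
      have hC0 : 0 ≤ C := ENNReal.toReal_nonneg
      have hIC : I = ENNReal.ofReal C := (ENNReal.ofReal_toReal hIlt.ne).symm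
      have hεbound : ∀ ε : ℝ, 0 ≤ ε → ε < levyGauge δ F G → ε ≤ Real.sqrt (C / δ) := by
        intro ε hε0 hεL
        have := key2 ε hε0 hεL
        rw [hIC, ENNReal.ofReal_le_ofReal_iff hC0] at this
        have h2 : ε ^ 2 ≤ C / δ := by
          rw [le_div_iff₀ hδ]; nlinarith
        calc ε = Real.sqrt (ε ^ 2) := (Real.sqrt_sq hε0).symm
          _ ≤ _ := Real.sqrt_le_sqrt h2
      have hLle : levyGauge δ F G ≤ Real.sqrt (C / δ) := by
        by_contra hcon
        push_neg at hcon
        have hs0 : 0 ≤ Real.sqrt (C / δ) := Real.sqrt_nonneg _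
        set ε := (Real.sqrt (C / δ) + levyGauge δ F G) / 2 with hε
        have h1 := hεbound ε (by linarith) (by linarith)
        unfold ε at h1
        linarith
      have hfin : levyGauge δ F G ^ 2 ≤ (1 / δ) * C := by
        have := pow_le_pow_left₀ hL0 hLle 2
        rwa [Real.sq_sqrt (by positivity), div_eq_mul_inv, mul_comm C, ← one_div] at this
      calc ENNReal.ofReal (levyGauge δ F G ^ 2) ≤ ENNReal.ofReal ((1 / δ) * C) :=
            ENNReal.ofReal_le_ofReal hfin
        _ = ENNReal.ofReal (1 / δ) * I := by
            rw [ENNReal.ofReal_mul (by positivity), hIC]
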